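/- Let γ ∈ Δ^m be a probability vector with m even, and let I be a uniformly random subset of {1,…,m} of size m/2. Then E[(∑_{i∈I} γ_i − 1/2)²] ≤ (1/(2m))·D_{χ²}(γ, (1/m)𝟙), where D_{χ²}(γ, u) = ∑_i u_i·(γ_i/u_i − 1)² is the chi-squared divergence between γ and the uniform vector u = (1/m,…,1/m). -/

import Mathlib

open Finset

/-- Subsets of size `k+1` of `s` containing `a` biject with size-`k` subsets of `s.erase a`. -/
lemma aux1 {α : Type*} [DecidableEq α] {s : Finset α} {a : α} (ha : a ∈ s) (k : ℕ) :
    ((s.powersetCard (k+1)).filter (fun I => a ∈ I)).card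
      = ((s.erase a).powersetCard k).card := by
  apply Finset.card_nbij' (fun I => I.erase a) (fun J => insert a J)
  · intro I hI
    simp only [mem_coe, mem_filter, mem_powersetCard] at hI ⊢
    obtain ⟨⟨hsub, hcard⟩, haI⟩ := hI
    constructor
    · intro x hx
      rw [mem_erase] at hx ⊢
      exact ⟨hx.1, hsub hx.2⟩
    · simp [card_erase_of_mem haI, hcard]
  · intro J hJ
    simp only [mem_coe, mem_filter, mem_powersetCard] at hJ ⊢
    obtain ⟨hsub, hcard⟩ := hJ
    have haJ : a ∉ J := fun h => (mem_erase.1 (hsub h)).1 rfl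
    refine ⟨⟨?_, ?_⟩, mem_insert_self a J⟩
    · intro x hx
      rcases mem_insert.1 hx with rfl | hx
      · exact ha
      · exact (mem_erase.1 (hsub hx)).2
    · rw [card_insert_of_notMem haJ, hcard]
  · intro I hI
    simp only [mem_coe, mem_filter] at hI
    exact insert_erase hI.2
  · intro J hJ
    simp only [mem_coe, mem_powersetCard] at hJ
    have haJ : a ∉ J := fun h => (mem_erase.1 (hJ.1 h)).1 rfl
    exact erase_insert haJ

/-- Same bijection, keeping track of membership of a second element `b ≠ a`. -/
lemma aux2 {α : Type*} [DecidableEq α] {s : Finset α} {a b : α} (ha : a ∈ s)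
    (hab : a ≠ b) (k : ℕ) :
    ((s.powersetCard (k+1)).filter (fun I => a ∈ I ∧ b ∈ I)).card
      = (((s.erase a).powersetCard k).filter (fun J => b ∈ J)).card := by
  apply Finset.card_nbij' (fun I => I.erase a) (fun J => insert a J)
  · intro I hI
    simp only [mem_coe, mem_filter, mem_powersetCard] at hI ⊢
    obtain ⟨⟨hsub, hcard⟩, haI, hbI⟩ := hI
    refine ⟨⟨?_, ?_⟩, ?_⟩
    · intro x hx
      rw [mem_erase] at hx ⊢
      exact ⟨hx.1, hsub hx.2⟩
    · simp [card_erase_of_mem haI, hcard]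
    · exact mem_erase.2 ⟨fun h => hab h.symm, hbI⟩
  · intro J hJ
    simp only [mem_coe, mem_filter, mem_powersetCard] at hJ ⊢
    obtain ⟨⟨hsub, hcard⟩, hbJ⟩ := hJ
    have haJ : a ∉ J := fun h => (mem_erase.1 (hsub h)).1 rfl
    refine ⟨⟨?_, ?_⟩, mem_insert_self a J, mem_insert_of_mem hbJ⟩
    · intro x hx
      rcases mem_insert.1 hx with rfl | hx
      · exact ha
      · exact (mem_erase.1 (hsub hx)).2
    · rw [card_insert_of_notMem haJ, hcard]
  · intro I hI
    simp only [mem_coe, mem_filter] at hI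
    exact insert_erase hI.2.1
  · intro J hJ
    simp only [mem_coe, mem_filter, mem_powersetCard] at hJ
    have haJ : a ∉ J := fun h => (mem_erase.1 (hJ.1.1 h)).1 rfl
    exact erase_insert haJ

/-- Expanding the square of a subset sum over a family of subsets. -/
lemma sum_sq_expand {α : Type*} [Fintype α] [DecidableEq α] (P : Finset (Finset α)) (f : α → ℝ) :
    ∑ I ∈ P, (∑ i ∈ I, f i) ^ 2
      = ∑ i, ∑ j, ((P.filter (fun I => i ∈ I ∧ j ∈ I)).card : ℝ) * (f i * f j) := by
  have h1 : ∀ I ∈ P, (∑ i ∈ I, f i) ^ 2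
      = ∑ i, ∑ j, (if i ∈ I ∧ j ∈ I then f i * f j else 0) := by
    intro I _
    have hs : (∑ i ∈ I, f i) = ∑ i, (if i ∈ I then f i else 0) := by
      rw [Finset.sum_ite_mem, Finset.univ_inter]
    rw [sq, hs, Finset.sum_mul_sum]
    refine Finset.sum_congr rfl fun i _ => Finset.sum_congr rfl fun j _ => ?_
    split_ifs with h1 h2 h3 <;> simp_all
  rw [Finset.sum_congr rfl h1, Finset.sum_comm]
  refine Finset.sum_congr rfl fun i _ => ?_
  rw [Finset.sum_comm]
  refine Finset.sum_congr rfl fun j _ => ?_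
  rw [Finset.sum_ite, Finset.sum_const, Finset.sum_const_zero, add_zero, nsmul_eq_mul]

theorem stmt8 (m : ℕ) (hm : Even m) (γ : Fin m → ℝ)
    (hγ0 : ∀ i, 0 ≤ γ i) (hγ1 : ∑ i, γ i = 1) :
    (∑ I ∈ (Finset.univ : Finset (Fin m)).powersetCard (m / 2),
        (∑ i ∈ I, γ i - 1 / 2) ^ 2)
        / ((((Finset.univ : Finset (Fin m)).powersetCard (m / 2)).card : ℝ))
      ≤ (1 / (2 * m)) * (m * ∑ i, (γ i - 1 / m) ^ 2) := by
  have hm0 : m ≠ 0 := by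
    rintro rfl
    simp at hγ1
  obtain ⟨n, rfl⟩ : ∃ n, m = 2 * n + 2 := by
    obtain ⟨r, hr⟩ := hm
    exact ⟨r - 1, by omega⟩
  have hk : (2 * n + 2) / 2 = n + 1 := by omega
  rw [hk]
  set δ : Fin (2 * n + 2) → ℝ := fun i => γ i - 1 / ((2 * n + 2 : ℕ) : ℝ) with hδ
  have hmr : ((2 * n + 2 : ℕ) : ℝ) ≠ 0 := by positivity
  set P := (Finset.univ : Finset (Fin (2 * n + 2))).powersetCard (n + 1) with hP
  have hδ0 : ∑ i, δ i = 0 := by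
    simp only [hδ, Finset.sum_sub_distrib, hγ1, Finset.sum_const, Finset.card_univ,
      Fintype.card_fin, nsmul_eq_mul]
    field_simp; ring
  have hstep : ∀ I ∈ P, (∑ i ∈ I, γ i - 1 / 2) = ∑ i ∈ I, δ i := by
    intro I hI
    have hcard : I.card = n + 1 := (mem_powersetCard.1 hI).2
    rw [hδ]
    rw [Finset.sum_sub_distrib, Finset.sum_const, hcard, nsmul_eq_mul]
    have h2 : (2 * (n:ℝ) + 2) ≠ 0 := by positivity
    push_cast
    field_simp
  rw [Finset.sum_congr rfl (fun I hI => by rw [hstep I hI])]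
  -- counting
  have hcii : ∀ i : Fin (2 * n + 2),
      (P.filter (fun I => i ∈ I ∧ i ∈ I)).card = (2 * n + 1).choose n := by
    intro i
    simp only [and_self]
    rw [hP, aux1 (Finset.mem_univ i) n, Finset.card_powersetCard,
      Finset.card_erase_of_mem (Finset.mem_univ i), Finset.card_univ, Fintype.card_fin]
    congr 1
  have hpair : ∃ N2 : ℕ, ∀ i j : Fin (2 * n + 2), i ≠ j →
      (P.filter (fun I => i ∈ I ∧ j ∈ I)).card = N2 := by
    cases n with
    | zero =>
      refine ⟨0, fun i j hij => ?_⟩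
      rw [hP, aux2 (Finset.mem_univ i) hij 0, Finset.powersetCard_zero]
      simp [Finset.filter_singleton]
    | succ n' =>
      refine ⟨(2 * n' + 2).choose n', fun i j hij => ?_⟩
      have hj : j ∈ (Finset.univ : Finset (Fin (2 * (n' + 1) + 2))).erase i :=
        Finset.mem_erase.2 ⟨hij.symm, Finset.mem_univ j⟩
      rw [hP, aux2 (Finset.mem_univ i) hij (n' + 1), aux1 hj n', Finset.card_powersetCard,
        Finset.card_erase_of_mem hj,
        Finset.card_erase_of_mem (Finset.mem_univ i), Finset.card_univ, Fintype.card_fin]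
      congr 1
  obtain ⟨N2, hN2⟩ := hpair
  set N1 := (2 * n + 1).choose n with hN1
  -- the key sum computation
  have hsum : ∑ I ∈ P, (∑ i ∈ I, δ i) ^ 2
      = (N1 : ℝ) * ∑ i, δ i ^ 2 - (N2 : ℝ) * ∑ i, δ i ^ 2 := by
    rw [sum_sq_expand]
    have hsplit : ∀ i : Fin (2 * n + 2),
        ∑ j, ((P.filter (fun I => i ∈ I ∧ j ∈ I)).card : ℝ) * (δ i * δ j)
          = (N1 : ℝ) * δ i ^ 2 + (N2 : ℝ) * (δ i * (0 - δ i)) := by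
      intro i
      rw [← Finset.add_sum_erase _ _ (Finset.mem_univ i), hcii i]
      have h2 : ∑ j ∈ Finset.univ.erase i,
          ((P.filter (fun I => i ∈ I ∧ j ∈ I)).card : ℝ) * (δ i * δ j)
          = (N2 : ℝ) * (δ i * ∑ j ∈ Finset.univ.erase i, δ j) := by
        rw [Finset.mul_sum, Finset.mul_sum]
        refine Finset.sum_congr rfl fun j hj => ?_
        rw [hN2 i j (Finset.mem_erase.1 hj).1.symm]
      rw [h2, Finset.sum_erase_eq_sub (Finset.mem_univ i), hδ0]
      ring
    rw [Finset.sum_congr rfl fun i _ => hsplit i, Finset.sum_add_distrib,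
      ← Finset.mul_sum, ← Finset.mul_sum]
    have : ∑ i, δ i * (0 - δ i) = -∑ i, δ i ^ 2 := by
      rw [← Finset.sum_neg_distrib]
      exact Finset.sum_congr rfl fun i _ => by ring
    rw [this]
    ring
  have hCcard : P.card = (2 * n + 2).choose (n + 1) := by
    rw [hP, Finset.card_powersetCard, Finset.card_univ, Fintype.card_fin]
  have h2N1 : 2 * N1 = (2 * n + 2).choose (n + 1) := by
    have h := Nat.add_one_mul_choose_eq (2 * n + 1) n
    have : (2 * n + 2) * (2 * n + 1).choose n = (2 * n + 2).choose (n + 1) * (n + 1) := by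
      simpa [Nat.succ_eq_add_one] using h
    have h' : (2 * (2 * n + 1).choose n) * (n + 1) = (2 * n + 2).choose (n + 1) * (n + 1) := by
      rw [← this]; ring
    exact Nat.eq_of_mul_eq_mul_right (by omega) h'
  have hCpos : 0 < ((P.card : ℕ) : ℝ) := by
    rw [hCcard]
    exact_mod_cast Nat.choose_pos (by omega)
  have hδsq : (0:ℝ) ≤ ∑ i, δ i ^ 2 := Finset.sum_nonneg fun i _ => sq_nonneg _
  have hSle : ∑ I ∈ P, (∑ i ∈ I, δ i) ^ 2 ≤ (N1 : ℝ) * ∑ i, δ i ^ 2 := by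
    rw [hsum]
    have : (0:ℝ) ≤ (N2 : ℝ) * ∑ i, δ i ^ 2 := by positivity
    linarith
  have hRHS : (1 / (2 * ((2 * n + 2 : ℕ) : ℝ))) * (((2 * n + 2 : ℕ) : ℝ) * ∑ i, δ i ^ 2)
      = (1 / 2) * ∑ i, δ i ^ 2 := by
    field_simp
  calc (∑ I ∈ P, (∑ i ∈ I, δ i) ^ 2) / ((P.card : ℕ) : ℝ)
      ≤ ((N1 : ℝ) * ∑ i, δ i ^ 2) / ((P.card : ℕ) : ℝ) := by
        gcongr
    _ = (1 / (2 * ((2 * n + 2 : ℕ) : ℝ))) * (((2 * n + 2 : ℕ) : ℝ) * ∑ i, δ i ^ 2) := by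
        rw [hRHS]
        have hC : ((P.card : ℕ) : ℝ) = 2 * (N1 : ℝ) := by
          rw [hCcard, ← h2N1]; push_cast; ring
        rw [hC]
        have hN1pos : (0:ℝ) < (N1 : ℝ) := by
          exact_mod_cast Nat.choose_pos (by omega)
        field_simp
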